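/- Let H be a complex Hilbert space and W an isometry on H. Then there exist isometries U and V on K = lp (fun _ : List (Fin d) => H) 2 such that for every σ ∈ List (Fin d) and h ∈ H: U(single σ h) = single (act 1 σ) (W^{carry 1 σ} h) and V(single σ h) = single (0 :: σ) h. -/

import Mathlib

open scoped Classical ENNReal

namespace BSpaper

/-- `act m σ`: the result of pulling `b^m` through the stem with digit string `σ`
in `BS(c,d)` (acting on the digits). -/
def act (c : ℕ) {d : ℕ} : ℕ → List (Fin d) → List (Fin d)
  | _, [] => []
  | m, i :: σ => ⟨(m + (i : ℕ)) % d, Nat.mod_lt _ i.pos⟩ :: act c (c * ((m + (i : ℕ)) / d)) σ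

/-- `carry m σ`: the power of `b` emerging on the right when `b^m` is pulled through the
stem with digit string `σ`. -/
def carry (c : ℕ) {d : ℕ} : ℕ → List (Fin d) → ℕ
  | m, [] => m
  | m, i :: σ => carry c (c * ((m + (i : ℕ)) / d)) σ

lemma act_inj (c : ℕ) {d : ℕ} :
    ∀ (σ₁ : List (Fin d)) (m : ℕ) (σ₂ : List (Fin d)), act c m σ₁ = act c m σ₂ → σ₁ = σ₂ := by
  intro σ₁
  induction σ₁ with
  | nil =>
    intro m σ₂ h
    cases σ₂ with
    | nil => rfl
    | cons j τ => simp [act] at h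
  | cons i σ ih =>
    intro m σ₂ h
    cases σ₂ with
    | nil => simp [act] at h
    | cons j τ =>
      simp only [act, List.cons.injEq, Fin.mk.injEq] at h
      obtain ⟨h1, h2⟩ := h
      have hij : (i : ℕ) = (j : ℕ) := by
        have hmod : (i : ℕ) ≡ (j : ℕ) [MOD d] := Nat.ModEq.add_left_cancel' m h1
        rwa [Nat.ModEq, Nat.mod_eq_of_lt i.isLt, Nat.mod_eq_of_lt j.isLt] at hmod
      have hij' : i = j := Fin.ext hij
      subst hij'
      exact congrArg (i :: ·) (ih _ _ h2)

open ContinuousLinearMap in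
lemma exists_shift_isometry {ι : Type*} [DecidableEq ι] {H : Type*} [NormedAddCommGroup H]
    [InnerProductSpace ℂ H] [CompleteSpace H]
    (f : ι → ι) (hf : Function.Injective f)
    (T : ι → (H →L[ℂ] H)) (hT : ∀ σ h, ‖T σ h‖ = ‖h‖) :
    ∃ U : lp (fun _ : ι => H) 2 →L[ℂ] lp (fun _ : ι => H) 2,
      adjoint U * U = 1 ∧
      ∀ (σ : ι) (h : H), U (lp.single 2 σ h) = lp.single 2 (f σ) (T σ h) := by
  have hp : 0 < (2 : ℝ≥0∞).toReal := by norm_num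
  have hnormfun : ∀ x : lp (fun _ : ι => H) 2,
      (fun τ => ‖Function.extend f (fun σ => T σ (x σ)) (0 : ∀ _ : ι, H) τ‖ ^ (2 : ℝ≥0∞).toReal)
        = Function.extend f (fun σ => ‖x σ‖ ^ (2 : ℝ≥0∞).toReal) 0 := by
    intro x
    funext τ
    by_cases hτ : ∃ σ, f σ = τ
    · obtain ⟨σ, rfl⟩ := hτ
      rw [hf.extend_apply, hf.extend_apply, hT]
    · rw [Function.extend_apply' _ _ _ hτ, Function.extend_apply' _ _ _ hτ]
      simp only [Pi.zero_apply, norm_zero]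
      rw [Real.zero_rpow (by norm_num)]
  have hmem : ∀ x : lp (fun _ : ι => H) 2,
      Memℓp (Function.extend f (fun σ => T σ (x σ)) (0 : ∀ _ : ι, H)) 2 := by
    intro x
    apply memℓp_gen
    rw [hnormfun x]
    exact (summable_extend_zero hf).2 ((memℓp_gen_iff hp).1 (lp.memℓp x))
  let Lmap : lp (fun _ : ι => H) 2 →ₗ[ℂ] lp (fun _ : ι => H) 2 :=
    { toFun := fun x => ⟨Function.extend f (fun σ => T σ (x σ)) 0, hmem x⟩
      map_add' := by
        intro x y
        apply lp.ext
        funext τ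
        show Function.extend f (fun σ => T σ ((x + y) σ)) 0 τ
          = (Function.extend f (fun σ => T σ (x σ)) 0 τ)
            + (Function.extend f (fun σ => T σ (y σ)) 0 τ)
        by_cases hτ : ∃ σ, f σ = τ
        · obtain ⟨σ, rfl⟩ := hτ
          rw [hf.extend_apply, hf.extend_apply, hf.extend_apply, lp.coeFn_add, Pi.add_apply,
            map_add]
        · rw [Function.extend_apply' _ _ _ hτ, Function.extend_apply' _ _ _ hτ,
            Function.extend_apply' _ _ _ hτ]
          simp
      map_smul' := by
        intro a x
        apply lp.ext
        funext τ
        show Function.extend f (fun σ => T σ ((a • x) σ)) 0 τ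
          = a • (Function.extend f (fun σ => T σ (x σ)) 0 τ)
        by_cases hτ : ∃ σ, f σ = τ
        · obtain ⟨σ, rfl⟩ := hτ
          rw [hf.extend_apply, hf.extend_apply, lp.coeFn_smul, Pi.smul_apply, map_smul]
        · rw [Function.extend_apply' _ _ _ hτ, Function.extend_apply' _ _ _ hτ]
          simp }
  have hLmap : ∀ (x : lp (fun _ : ι => H) 2) (τ : ι),
      (Lmap x : ∀ _ : ι, H) τ = Function.extend f (fun σ => T σ (x σ)) 0 τ := fun _ _ => rfl
  let L : lp (fun _ : ι => H) 2 →ₗᵢ[ℂ] lp (fun _ : ι => H) 2 :=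
    { Lmap with
      norm_map' := by
        intro x
        rw [lp.norm_eq_tsum_rpow hp, lp.norm_eq_tsum_rpow hp]
        congr 1
        calc ∑' τ, ‖(Lmap x : ∀ _ : ι, H) τ‖ ^ (2 : ℝ≥0∞).toReal
            = ∑' τ, Function.extend f (fun σ => ‖x σ‖ ^ (2 : ℝ≥0∞).toReal) 0 τ := by
              rw [← hnormfun x]; rfl
          _ = ∑' σ, ‖x σ‖ ^ (2 : ℝ≥0∞).toReal := tsum_extend_zero hf _ }
  refine ⟨L.toContinuousLinearMap, ?_, ?_⟩
  · refine ContinuousLinearMap.ext fun x => ?_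
    refine ext_inner_right ℂ fun y => ?_
    rw [ContinuousLinearMap.mul_apply, adjoint_inner_left, ContinuousLinearMap.one_apply]
    exact L.inner_map_map x y
  · intro σ h
    apply lp.ext
    funext τ
    show Function.extend f
        (fun σ' => T σ' ((lp.single 2 σ h : lp (fun _ : ι => H) 2) σ')) 0 τ
      = (lp.single 2 (f σ) (T σ h) : lp (fun _ : ι => H) 2) τ
    by_cases hτ : ∃ σ', f σ' = τ
    · obtain ⟨σ', rfl⟩ := hτ
      rw [hf.extend_apply]
      by_cases hσ : σ' = σ
      · subst hσ
        rw [lp.single_apply_self, lp.single_apply_self]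
      · rw [lp.single_apply_ne _ _ _ hσ, lp.single_apply_ne _ _ _ (fun hc => hσ (hf hc)),
          map_zero]
    · rw [Function.extend_apply' _ _ _ hτ,
        lp.single_apply_ne _ _ _ (fun hc => hτ ⟨σ, hc.symm⟩)]
      rfl

open ContinuousLinearMap in
/-- Given a Hilbert space H and an isometry W on H, there exist isometries U and V on
K = lp (fun _ : List (Fin d) => H) 2 such that for every σ and h:
U (single σ h) = single (act 1 σ) (W^(carry 1 σ) h) and V (single σ h) = single (0 :: σ) h. -/
theorem statement14 (c d : ℕ) (hc : 0 < c) (hd : 0 < d)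
    {H : Type*} [NormedAddCommGroup H] [InnerProductSpace ℂ H] [CompleteSpace H]
    (W : H →L[ℂ] H) (hW : adjoint W * W = 1) :
    ∃ U V : lp (fun _ : List (Fin d) => H) 2 →L[ℂ] lp (fun _ : List (Fin d) => H) 2,
      adjoint U * U = 1 ∧ adjoint V * V = 1 ∧
      (∀ (σ : List (Fin d)) (h : H),
        U (lp.single 2 σ h) = lp.single 2 (act c 1 σ) ((W ^ carry c 1 σ) h)) ∧
      (∀ (σ : List (Fin d)) (h : H),
        V (lp.single 2 σ h) = lp.single 2 ((⟨0, hd⟩ : Fin d) :: σ) h) := by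
  have hWnorm : ∀ h : H, ‖W h‖ = ‖h‖ := by
    intro h
    have h0 : (adjoint W) (W h) = h := by
      have := congrArg (fun A : H →L[ℂ] H => A h) hW
      simpa using this
    have h1 : (inner ℂ (W h) (W h) : ℂ) = inner ℂ h h := by
      rw [← adjoint_inner_left, h0]
    rw [@norm_eq_sqrt_re_inner ℂ, @norm_eq_sqrt_re_inner ℂ H _ _ _ h, h1]
  have hWpow : ∀ (n : ℕ) (h : H), ‖(W ^ n) h‖ = ‖h‖ := by
    intro n
    induction n with
    | zero => intro h; simp
    | succ k ih =>
      intro h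
      rw [pow_succ, ContinuousLinearMap.mul_apply, ih, hWnorm]
  obtain ⟨U, hU1, hU2⟩ := exists_shift_isometry (act c 1) (fun _ _ h => act_inj c _ 1 _ h)
    (fun σ => W ^ carry c 1 σ) (fun σ h => hWpow _ h)
  obtain ⟨V, hV1, hV2⟩ := exists_shift_isometry (fun σ : List (Fin d) => (⟨0, hd⟩ : Fin d) :: σ)
    (fun _ _ h => List.cons_injective h) (fun _ => (1 : H →L[ℂ] H)) (fun _ h => by simp)
  exact ⟨U, V, hU1, hV1, hU2, fun σ h => by simpa using hV2 σ h⟩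

end BSpaper
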